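/- Every complex root α of u(x) = x^{m+1}(x^{m+1}+x)^k − 1 satisfies |α| < r₀ = ((m+1)(k+1)/(mk))^{k/(m+k+1)}. -/

import Mathlib

lemma aux_key_ineq (t : ℝ) (ht : 0 < t) : (2*t+1)/(t+1) < (1 + 1/t) ^ t := by
  have ht1 : (0:ℝ) < t + 1 := by linarith
  have hx : (1:ℝ) < 1 + 1/t := by
    have := one_div_pos.mpr ht; linarith
  have hA : Real.log ((2*t+1)/(t+1)) < t/(t+1) := by
    have h1 : (0:ℝ) < (2*t+1)/(t+1) := by positivity
    have h2 : (2*t+1)/(t+1) ≠ 1 := by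
      intro h
      rw [div_eq_one_iff_eq (by linarith)] at h
      linarith
    have h3 := Real.log_lt_sub_one_of_pos h1 h2
    have h4 : (2*t+1)/(t+1) - 1 = t/(t+1) := by field_simp; ring
    linarith
  have hxeq : 1 + 1/t = (t+1)/t := by field_simp
  have hB : 1/(t+1) < Real.log (1 + 1/t) := by
    have h1 : (0:ℝ) < t/(t+1) := by positivity
    have h2 : t/(t+1) ≠ 1 := by
      intro h; rw [div_eq_one_iff_eq (by linarith)] at h; linarith
    have h3 := Real.log_lt_sub_one_of_pos h1 h2
    have h4 : t/(t+1) - 1 = -(1/(t+1)) := by field_simp; ring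
    have h5 : Real.log (t/(t+1)) = -Real.log ((t+1)/t) := by
      rw [← Real.log_inv]; congr 1; rw [inv_div]
    rw [hxeq]
    linarith
  have hC : Real.log ((2*t+1)/(t+1)) < t * Real.log (1+1/t) := by
    have h1 : t * (1/(t+1)) < t * Real.log (1+1/t) := mul_lt_mul_of_pos_left hB ht
    have h2 : t * (1/(t+1)) = t/(t+1) := by ring
    linarith
  calc (2*t+1)/(t+1) = Real.exp (Real.log ((2*t+1)/(t+1))) :=
        (Real.exp_log (by positivity)).symm
    _ < Real.exp (t * Real.log (1+1/t)) := Real.exp_lt_exp.mpr hC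
    _ = (1+1/t) ^ t := by rw [Real.rpow_def_of_pos (by linarith), mul_comm]

theorem abs_root_lt_r0 (m k : ℕ) (hm : 1 ≤ m) (hk : 1 ≤ k) (α : ℂ)
    (hα : α ^ (m + 1) * (α ^ (m + 1) + α) ^ k - 1 = 0) :
    ‖α‖ < (((m : ℝ) + 1) * ((k : ℝ) + 1) / ((m : ℝ) * k)) ^ ((k : ℝ) / ((m : ℝ) + k + 1)) := by
  by_contra hcon
  push_neg at hcon
  have hM : (1:ℝ) ≤ (m:ℝ) := by exact_mod_cast hm
  have hK : (1:ℝ) ≤ (k:ℝ) := by exact_mod_cast hk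
  have hM0 : (0:ℝ) < (m:ℝ) := by linarith
  have hK0 : (0:ℝ) < (k:ℝ) := by linarith
  have hden0 : (0:ℝ) < (m:ℝ) + (k:ℝ) + 1 := by linarith
  set c : ℝ := ((m:ℝ)+1)*((k:ℝ)+1)/((m:ℝ)*(k:ℝ)) with hc_def
  set e : ℝ := (k:ℝ)/((m:ℝ)+(k:ℝ)+1) with he_def
  set t : ℝ := (m:ℝ)*(k:ℝ)/((m:ℝ)+(k:ℝ)+1) with ht_def
  set r : ℝ := ‖α‖ with hr_def
  -- hcon : c ^ e ≤ r
  have hc0 : (0:ℝ) < c := div_pos (by nlinarith) (mul_pos hM0 hK0)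
  have hc1 : (1:ℝ) < c := by
    rw [hc_def, lt_div_iff₀ (mul_pos hM0 hK0)]
    nlinarith
  have ht0 : (0:ℝ) < t := div_pos (mul_pos hM0 hK0) hden0
  have hct : c = 1 + 1/t := by
    rw [hc_def, ht_def]
    field_simp
    ring
  have he0 : (0:ℝ) < e := div_pos hK0 hden0
  have hr01 : (1:ℝ) < c ^ e :=
    (Real.one_lt_rpow_iff_of_pos hc0).mpr (Or.inl ⟨hc1, he0⟩)
  have hr1 : (1:ℝ) < r := lt_of_lt_of_le hr01 hcon
  have hr0 : (0:ℝ) < r := by linarith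
  -- the algebraic equation
  have heq : α ^ (m+1) * (α ^ (m+1) + α) ^ k = 1 := by
    have := sub_eq_zero.mp hα; exact this
  have hfac : α ^ (m+1) + α = α * (α ^ m + 1) := by ring
  have h1 : r ^ (m+k+1) * (‖α ^ m + 1‖) ^ k = 1 := by
    have h' := congrArg (‖·‖) heq
    rw [hfac] at h'
    simp only [norm_mul, norm_pow, norm_one] at h'
    calc r ^ (m+k+1) * (‖α ^ m + 1‖) ^ k
        = ‖α‖ ^ (m+1) * (‖α‖ * ‖α ^ m + 1‖) ^ k := by
          rw [hr_def]; ring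
      _ = 1 := h'
  set b : ℝ := ‖α ^ m + 1‖ with hb_def
  have hb0 : (0:ℝ) ≤ b := norm_nonneg _
  -- r₀ ^ (m+k+1) = c ^ k  (nat pow)
  have hr0pow : (c ^ e) ^ (m+k+1) = c ^ k := by
    rw [← Real.rpow_natCast (c ^ e) (m+k+1), ← Real.rpow_mul hc0.le,
      ← Real.rpow_natCast c k]
    congr 1
    rw [he_def]
    push_cast
    field_simp
  -- r₀ ^ m = c ^ t (rpow)
  have hr0powm : (c ^ e) ^ m = c ^ t := by
    rw [← Real.rpow_natCast (c ^ e) m, ← Real.rpow_mul hc0.le]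
    congr 1
    rw [he_def, ht_def]
    field_simp
  -- from hcon : c^k ≤ r^(m+k+1)
  have hck_le : c ^ k ≤ r ^ (m+k+1) := by
    rw [← hr0pow]
    exact pow_le_pow_left₀ (Real.rpow_nonneg hc0.le e) hcon _
  have hck0 : (0:ℝ) < c ^ k := pow_pos hc0 k
  have hbk : b ^ k = (r ^ (m+k+1))⁻¹ := eq_inv_of_mul_eq_one_right h1
  have hbk' : b ^ k ≤ (c⁻¹) ^ k := by
    rw [hbk, inv_pow]
    exact inv_anti₀ hck0 hck_le
  have hb_le : b ≤ c⁻¹ :=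
    (pow_le_pow_iff_left₀ hb0 (by positivity) (by omega)).mp hbk'
  -- triangle inequality : r^m ≤ b + 1
  have htri : r ^ m ≤ b + 1 := by
    have h' := norm_sub_le (α ^ m + 1) 1
    simp only [add_sub_cancel_right, norm_one] at h'
    calc r ^ m = ‖α ^ m‖ := by rw [hr_def, ← norm_pow]
      _ ≤ b + 1 := h'
  -- key inequality : 1 + c⁻¹ < c ^ t
  have hkey : 1 + c⁻¹ < c ^ t := by
    have h2 := aux_key_ineq t ht0
    rw [← hct] at h2
    have h3 : 1 + c⁻¹ = (2*t+1)/(t+1) := by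
      rw [hct]
      have ht1 : (0:ℝ) < t + 1 := by linarith
      field_simp
      ring
    linarith
  have hfin : (c ^ e) ^ m ≤ r ^ m := pow_le_pow_left₀ (Real.rpow_nonneg hc0.le e) hcon m
  rw [hr0powm] at hfin
  linarith
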